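/- For α > 0 and x ≥ 0, the limit as y → 1⁻ of (1-y)^{-1}(G_α(x) - y^{1-α} e^{(y-1)x} G_α(xy)) equals x g_α(x) + (1 + x - α) G_α(x). -/

import Mathlib

noncomputable def G (β x : ℝ) : ℝ := (1 / Real.Gamma β) * ∫ t in (0:ℝ)..x, Real.exp (-t) * t ^ (β - 1)

noncomputable def g (β x : ℝ) : ℝ := Real.exp (-x) * x ^ (β - 1) / Real.Gamma β

theorem stmt_3 (α x : ℝ) (hα : 0 < α) (hx : 0 ≤ x) :
    Filter.Tendsto
      (fun y : ℝ => (1 - y)⁻¹ * (G α x - y ^ (1 - α) * Real.exp ((y - 1) * x) * G α (x * y)))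
      (nhdsWithin 1 (Set.Iio 1))
      (nhds (x * g α x + (1 + x - α) * G α x)) := by
  rcases eq_or_lt_of_le hx with h0 | hxpos
  · -- x = 0
    subst h0
    have hG0 : G α 0 = 0 := by simp [G]
    have hfun : (fun y : ℝ => (1 - y)⁻¹ *
        (G α 0 - y ^ (1 - α) * Real.exp ((y - 1) * 0) * G α (0 * y))) = fun _ => 0 := by
      funext y; simp [hG0]
    rw [hfun, hG0]
    simp only [zero_mul, mul_zero, add_zero]
    exact tendsto_const_nhds
  · -- x > 0
    set f : ℝ → ℝ := fun t => Real.exp (-t) * t ^ (α - 1) with hf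
    have hintf : IntervalIntegrable f MeasureTheory.volume 0 x := by
      apply (intervalIntegral.intervalIntegrable_rpow' (by linarith : (-1:ℝ) < α - 1)).continuousOn_mul
      exact (Real.continuous_exp.comp continuous_neg).continuousOn
    have hcontOn : ContinuousOn f (Set.Ioi (0:ℝ)) := by
      intro t ht
      exact (((Real.continuous_exp.comp continuous_neg).continuousAt).mul
        (Real.continuousAt_rpow_const t (α - 1) (Or.inl (ne_of_gt ht)))).continuousWithinAt
    have hmeasf : StronglyMeasurableAtFilter f (nhds x) MeasureTheory.volume :=
      ⟨Set.Ioi 0, Ioi_mem_nhds hxpos, hcontOn.aestronglyMeasurable measurableSet_Ioi⟩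
    have hcontf : ContinuousAt f x := by
      exact ((Real.continuous_exp.comp continuous_neg).continuousAt).mul
        (Real.continuousAt_rpow_const x (α - 1) (Or.inl (ne_of_gt hxpos)))
    have hFTC : HasDerivAt (fun u => ∫ t in (0:ℝ)..u, f t) (f x) x :=
      intervalIntegral.integral_hasDerivAt_right hintf hmeasf hcontf
    have hG : HasDerivAt (G α) (g α x) x := by
      have h := hFTC.const_mul (1 / Real.Gamma α)
      refine HasDerivAt.congr_deriv (f := G α) h ?_
      simp [g, hf, div_eq_mul_inv]; ring
    have hinner : HasDerivAt (fun y : ℝ => x * y) x 1 := by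
      simpa using (hasDerivAt_id (1:ℝ)).const_mul x
    have hGc : HasDerivAt (fun y : ℝ => G α (x * y)) (g α x * x) 1 := by
      have h1 : HasDerivAt (G α) (g α x) (x * 1) := by rwa [mul_one]
      exact h1.comp 1 hinner
    have hA : HasDerivAt (fun y : ℝ => y ^ (1 - α)) (1 - α) 1 := by
      have := Real.hasDerivAt_rpow_const (x := (1:ℝ)) (p := 1 - α) (Or.inl one_ne_zero)
      simpa using this
    have hB : HasDerivAt (fun y : ℝ => Real.exp ((y - 1) * x)) x 1 := by
      have hi : HasDerivAt (fun y : ℝ => (y - 1) * x) x 1 := by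
        simpa using ((hasDerivAt_id (1:ℝ)).sub_const 1).mul_const x
      simpa using hi.exp
    have hF : HasDerivAt
        (fun y : ℝ => y ^ (1 - α) * Real.exp ((y - 1) * x) * G α (x * y))
        (x * g α x + (1 + x - α) * G α x) 1 := by
      have h := (hA.mul hB).mul hGc
      refine h.congr_deriv ?_
      simp
      ring
    have hslope := hasDerivAt_iff_tendsto_slope.mp hF
    have hmono : nhdsWithin (1:ℝ) (Set.Iio 1) ≤ nhdsWithin (1:ℝ) {(1:ℝ)}ᶜ :=
      nhdsWithin_mono _ (fun y hy => ne_of_lt hy)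
    refine (hslope.mono_left hmono).congr fun y => ?_
    have hF1 : (1:ℝ) ^ (1 - α) * Real.exp ((1 - 1) * x) * G α (x * 1) = G α x := by
      simp
    rw [slope_def_field, hF1]
    rw [show (1 - y) = -(y - 1) by ring, inv_neg]
    ring
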